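/- Let g : [0,∞) → ℝ be continuous, q₀ ∈ ℝ with q₀ ≠ 0, Z(t) = exp(−∫₀ᵗ g(s) ds), and let t* ∈ (0,∞] be the first time at which 1/q₀ + (1/2)∫₀ᵗ Z(s) ds vanishes (t* = ∞ if it never vanishes). Define Q(t) = Z(t)/(1/q₀ + (1/2)∫₀ᵗ Z(s) ds) and 𝔲(t) = Q(t) · exp( ∫₀ᵗ Q(s) ds + ∫₀ᵗ g(s) ds ) for t ∈ [0,t*). Then for every t ∈ [0,t*) one has exp(∫₀ᵗ Q(s) ds) = (1 + (1/2) q₀ ∫₀ᵗ Z(s) ds)² and 𝔲(t) = q₀ (1 + (1/2) q₀ ∫₀ᵗ Z(s) ds). In particular, if t* < ∞ then 𝔲(t) → 0 as t → t* from below. -/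

import Mathlib

open MeasureTheory Real Set Filter
open scoped ENNReal

/-- With `Z(t) = exp(−∫₀ᵗ g)` and `t*` the first time (possibly `∞`)
at which the denominator `1/q₀ + (1/2)∫₀ᵗ Z` vanishes, the quantities
`Q(t) = Z(t)/(1/q₀ + (1/2)∫₀ᵗ Z)` and
`𝔲(t) = Q(t)·exp(∫₀ᵗ Q + ∫₀ᵗ g)` satisfy, on `[0,t*)`,
`exp(∫₀ᵗ Q) = (1 + (1/2) q₀ ∫₀ᵗ Z)²` and `𝔲(t) = q₀ (1 + (1/2) q₀ ∫₀ᵗ Z)`;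
in particular, if `t* < ∞` then `𝔲(t) → 0` as `t → t*⁻`. -/
theorem u_absolutely_continuous_at_wave_breaking
    (g : ℝ → ℝ) (hg : Continuous g)
    (q₀ : ℝ) (hq₀ : q₀ ≠ 0)
    (Z : ℝ → ℝ) (hZ : ∀ t, Z t = Real.exp (-∫ s in (0:ℝ)..t, g s))
    (tstar : ℝ≥0∞)
    (htstar : tstar =
      sInf (ENNReal.ofReal ''
        {t : ℝ | 0 ≤ t ∧ 1 / q₀ + (1/2) * ∫ s in (0:ℝ)..t, Z s = 0}))
    (Q : ℝ → ℝ)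
    (hQ : ∀ t : ℝ, 0 ≤ t → ENNReal.ofReal t < tstar →
      Q t = Z t / (1 / q₀ + (1/2) * ∫ s in (0:ℝ)..t, Z s))
    (u : ℝ → ℝ)
    (hu : ∀ t : ℝ, 0 ≤ t → ENNReal.ofReal t < tstar →
      u t = Q t * Real.exp ((∫ s in (0:ℝ)..t, Q s) + ∫ s in (0:ℝ)..t, g s)) :
    (∀ t : ℝ, 0 ≤ t → ENNReal.ofReal t < tstar →
      Real.exp (∫ s in (0:ℝ)..t, Q s)
          = (1 + (1/2) * q₀ * ∫ s in (0:ℝ)..t, Z s)^2 ∧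
      u t = q₀ * (1 + (1/2) * q₀ * ∫ s in (0:ℝ)..t, Z s)) ∧
    (tstar ≠ ⊤ →
      Filter.Tendsto u (nhdsWithin tstar.toReal (Set.Iio tstar.toReal))
        (nhds 0)) := by
  -- The denominator function
  set F : ℝ → ℝ := fun t => 1 / q₀ + (1/2) * ∫ s in (0:ℝ)..t, Z s with hFdef
  have hZcont : Continuous Z := by
    have h1 : Continuous fun t => ∫ s in (0:ℝ)..t, g s :=
      intervalIntegral.continuous_primitive (fun a b => hg.intervalIntegrable a b) 0
    have : Continuous fun t => Real.exp (-∫ s in (0:ℝ)..t, g s) :=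
      Real.continuous_exp.comp h1.neg
    exact this.congr fun t => (hZ t).symm
  have hFcont : Continuous F := by
    have h1 : Continuous fun t => ∫ s in (0:ℝ)..t, Z s :=
      intervalIntegral.continuous_primitive (fun a b => hZcont.intervalIntegrable a b) 0
    exact continuous_const.add (continuous_const.mul h1)
  have hFderiv : ∀ t : ℝ, HasDerivAt F ((1/2) * Z t) t := by
    intro t
    have h1 : HasDerivAt (fun t => ∫ s in (0:ℝ)..t, Z s) (Z t) t :=
      intervalIntegral.integral_hasDerivAt_right (hZcont.intervalIntegrable _ _)
        (hZcont.stronglyMeasurableAtFilter _ _) hZcont.continuousAt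
    exact (h1.const_mul (1/2 : ℝ)).const_add (1/q₀)
  have hF0 : F 0 = 1 / q₀ := by simp [hFdef]
  have hFne : ∀ t : ℝ, 0 ≤ t → ENNReal.ofReal t < tstar → F t ≠ 0 := by
    intro t ht hlt h
    have : tstar ≤ ENNReal.ofReal t := by
      rw [htstar]
      exact sInf_le ⟨t, ⟨ht, h⟩, rfl⟩
    exact absurd hlt (not_lt.mpr this)
  -- Main pointwise identity
  have main : ∀ t : ℝ, 0 ≤ t → ENNReal.ofReal t < tstar →
      Real.exp (∫ s in (0:ℝ)..t, Q s) = (q₀ * F t)^2 ∧ u t = q₀^2 * F t := by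
    intro t ht hlt
    have hmem : ∀ x ∈ Set.uIcc (0:ℝ) t, 0 ≤ x ∧ ENNReal.ofReal x < tstar := by
      intro x hx
      rw [Set.uIcc_of_le ht] at hx
      exact ⟨hx.1, lt_of_le_of_lt (ENNReal.ofReal_le_ofReal hx.2) hlt⟩
    have hFne' : ∀ x ∈ Set.uIcc (0:ℝ) t, F x ≠ 0 := fun x hx =>
      hFne x (hmem x hx).1 (hmem x hx).2
    have hQcont : ContinuousOn Q (Set.uIcc (0:ℝ) t) := by
      apply ContinuousOn.congr (f := fun x => Z x / F x)
      · exact (hZcont.continuousOn).div (hFcont.continuousOn) hFne'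
      · intro x hx
        exact hQ x (hmem x hx).1 (hmem x hx).2
    have key : ∫ s in (0:ℝ)..t, Q s = Real.log ((F t)^2) - Real.log ((F 0)^2) := by
      apply intervalIntegral.integral_eq_sub_of_hasDerivAt
      · intro x hx
        have hFx := hFne' x hx
        have hQx : Q x = Z x / F x := hQ x (hmem x hx).1 (hmem x hx).2
        have hd : HasDerivAt (fun y => (F y)^2) (2 * F x ^ 1 * ((1/2) * Z x)) x :=
          (hFderiv x).pow 2
        have hl := hd.log (pow_ne_zero 2 hFx)
        refine hl.congr_deriv ?_
        rw [hQx]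
        field_simp
      · exact hQcont.intervalIntegrable
    have hFt := hFne t ht hlt
    have hF0ne : F 0 ≠ 0 := by rw [hF0]; exact one_div_ne_zero hq₀
    have hexp : Real.exp (∫ s in (0:ℝ)..t, Q s) = (q₀ * F t)^2 := by
      rw [key, Real.exp_sub, Real.exp_log (by positivity), Real.exp_log (by positivity),
        hF0]
      field_simp
    refine ⟨hexp, ?_⟩
    have hZt : Z t = Real.exp (-∫ s in (0:ℝ)..t, g s) := hZ t
    rw [hu t ht hlt, Real.exp_add, hexp, hQ t ht hlt, hZt]
    rw [Real.exp_neg]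
    have hFeq : (1 / q₀ + (1/2) * ∫ s in (0:ℝ)..t, Z s) = F t := rfl
    rw [hFeq]
    have hexpne : Real.exp (∫ s in (0:ℝ)..t, g s) ≠ 0 := Real.exp_ne_zero _
    field_simp [hFt, hexpne]
  have hid : ∀ t : ℝ, q₀ * F t = 1 + (1/2) * q₀ * ∫ s in (0:ℝ)..t, Z s := by
    intro t
    rw [hFdef]
    field_simp
  constructor
  · intro t ht hlt
    obtain ⟨h1, h2⟩ := main t ht hlt
    refine ⟨by rw [h1, hid t], ?_⟩
    rw [h2, ← hid t]
    ring
  · intro htop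
    set S : Set ℝ := {t : ℝ | 0 ≤ t ∧ F t = 0} with hSdef
    have hSne : S.Nonempty := by
      by_contra h
      rw [Set.not_nonempty_iff_eq_empty] at h
      rw [htstar] at htop
      apply htop
      rw [h]
      simp
    have hclosed : IsClosed S := by
      have : S = Set.Ici 0 ∩ F ⁻¹' {0} := by
        ext x; simp [hSdef, Set.mem_Ici]
      rw [this]
      exact isClosed_Ici.inter (isClosed_singleton.preimage hFcont)
    have hbdd : BddBelow S := ⟨0, fun x hx => hx.1⟩
    have haS : sInf S ∈ S := hclosed.csInf_mem hSne hbdd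
    set a := sInf S
    have ha0 : 0 < a := by
      rcases lt_or_eq_of_le haS.1 with h | h
      · exact h
      · exfalso
        have hFa0 : F a = 0 := haS.2
        rw [← h, hF0] at hFa0
        exact hq₀ (by simpa using hFa0)
    have htsa : tstar = ENNReal.ofReal a := by
      apply le_antisymm
      · rw [htstar]
        exact sInf_le ⟨a, haS, rfl⟩
      · rw [htstar]
        apply le_sInf
        rintro x ⟨s, hs, rfl⟩
        exact ENNReal.ofReal_le_ofReal (csInf_le hbdd hs)
    have hT : tstar.toReal = a := by rw [htsa, ENNReal.toReal_ofReal ha0.le]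
    rw [hT]
    have hFa : F a = 0 := haS.2
    have hcont : Filter.Tendsto (fun t => q₀^2 * F t)
        (nhdsWithin a (Set.Iio a)) (nhds 0) := by
      have h1 : Filter.Tendsto (fun t => q₀^2 * F t) (nhds a) (nhds (q₀^2 * F a)) :=
        ((continuous_const.mul hFcont).tendsto a)
      rw [hFa, mul_zero] at h1
      exact h1.mono_left nhdsWithin_le_nhds
    apply hcont.congr'
    filter_upwards [Ioo_mem_nhdsLT_of_mem (Set.mem_Ioc.mpr ⟨ha0, le_refl a⟩)] with t ht
    have hlt : ENNReal.ofReal t < tstar := by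
      rw [htsa]
      exact (ENNReal.ofReal_lt_ofReal_iff ha0).2 ht.2
    exact ((main t ht.1.le hlt).2).symm
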